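/- Let k ≥ 7 be odd, let G be a graph containing no odd cycle of length less than k, let C be the vertex set of a k-cycle in G, and let w be any vertex of G. Then there are at most three vertices of C at graph distance exactly 2 from w in G, and no two vertices of C at distance exactly 2 from w are adjacent. -/

import Mathlib

/-- `f` realizes a cycle of length `ℓ` in `G`: an injective map from `ZMod ℓ` whose
consecutive images are adjacent. -/
def IsCycleMap {V : Type*} (G : SimpleGraph V) {ℓ : ℕ} (f : ZMod ℓ → V) : Prop :=
  Function.Injective f ∧ ∀ i, G.Adj (f i) (f (i + 1))

/-- `G` contains no odd cycle of length less than `k`. -/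
def NoShortOddCycle {V : Type*} (G : SimpleGraph V) (k : ℕ) : Prop :=
  ∀ ℓ : ℕ, Odd ℓ → 3 ≤ ℓ → ℓ < k → ∀ f : ZMod ℓ → V, ¬ IsCycleMap G f

/-- If `k ≥ 7` is odd, `G` has no odd cycle of length less than `k`, `C` is the vertex set
of a `k`-cycle `f` in `G` and `w` is any vertex, then at most three vertices of `C` are at
graph distance exactly `2` from `w`, and no two vertices of `C` at distance exactly `2`
from `w` are adjacent. -/
lemma noOddClosedWalk {V : Type*} {G : SimpleGraph V} {k : ℕ} (hG : NoShortOddCycle G k) :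
    ∀ n, Odd n → n < k → ∀ g : ℕ → V, (∀ m, m < n → G.Adj (g m) (g (m + 1))) →
      g n = g 0 → False := by
  intro n
  induction n using Nat.strong_induction_on with
  | _ n IH =>
    intro hodd hnk g hadj hclosed
    have hodd' := Nat.odd_iff.mp hodd
    rcases eq_or_ne n 1 with h1 | h1
    · subst h1
      have := hadj 0 (by omega)
      rw [show (0:ℕ)+1 = 1 from rfl, hclosed] at this
      exact G.loopless.irrefl _ this
    have hn3 : 3 ≤ n := by omega
    by_cases hinj : ∀ a b, a < n → b < n → g a = g b → a = b
    · haveI : NeZero n := ⟨by omega⟩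
      haveI : Fact (1 < n) := ⟨by omega⟩
      refine hG n hodd hn3 hnk (fun z => g z.val) ⟨?_, ?_⟩
      · intro z z' h
        exact ZMod.val_injective n (hinj z.val z'.val (ZMod.val_lt z) (ZMod.val_lt z') h)
      · intro z
        show G.Adj (g z.val) (g (z + 1).val)
        have hv : (z + 1).val = (z.val + 1) % n := by
          rw [ZMod.val_add, ZMod.val_one]
        by_cases h : z.val + 1 < n
        · rw [hv, Nat.mod_eq_of_lt h]
          exact hadj z.val (by omega)
        · have hz : z.val + 1 = n := by have := ZMod.val_lt z; omega
          rw [hv, hz, Nat.mod_self]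
          have h2 := hadj z.val (by omega)
          rwa [hz, hclosed] at h2
    · push_neg at hinj
      obtain ⟨a0, b0, ha0, hb0, hg0, hne0⟩ := hinj
      obtain ⟨a, b, hab, hbn, hg⟩ : ∃ a b, a < b ∧ b < n ∧ g a = g b := by
        rcases lt_or_gt_of_ne hne0 with h | h
        · exact ⟨a0, b0, h, hb0, hg0⟩
        · exact ⟨b0, a0, h, ha0, hg0.symm⟩
      rcases (by rw [Nat.odd_iff, Nat.odd_iff]; omega : Odd (b - a) ∨ Odd (n - (b - a))) with
        hcase | hcase
      · refine IH (b - a) (by omega) hcase (by omega) (fun m => g (a + m)) (fun m hm => ?_) ?_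
        · show G.Adj (g (a + m)) (g (a + (m + 1)))
          have := hadj (a + m) (by omega)
          rwa [show a + m + 1 = a + (m + 1) by omega] at this
        · show g (a + (b - a)) = g (a + 0)
          rw [show a + (b - a) = b by omega, ← hg, Nat.add_zero]
      · refine IH (n - (b - a)) (by omega) hcase (by omega)
          (fun m => if m ≤ a then g m else g (m + (b - a))) (fun m hm => ?_) ?_
        · by_cases h1 : m + 1 ≤ a
          · simp only [if_pos (by omega : m ≤ a), if_pos h1]
            exact hadj m (by omega)
          · by_cases h2 : m ≤ a
            · have hma : m = a := by omega
              subst hma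
              simp only [if_pos (le_refl m), if_neg h1, hg, show m + 1 + (b - m) = b + 1 by omega]
              exact hadj b (by omega)
            · simp only [if_neg h2, if_neg (by omega : ¬ m + 1 ≤ a),
                show m + 1 + (b - a) = m + (b - a) + 1 by omega]
              exact hadj (m + (b - a)) (by omega)
        · simp only [if_neg (by omega : ¬ n - (b - a) ≤ a), if_pos (by omega : (0:ℕ) ≤ a),
            show n - (b - a) + (b - a) = n by omega]
          exact hclosed

lemma existsMid {V : Type*} {G : SimpleGraph V} {w v : V} (h : G.dist w v = 2) :
    ∃ x, G.Adj w x ∧ G.Adj x v := by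
  obtain ⟨p, hp⟩ := G.exists_walk_of_dist_ne_zero (by rw [h]; norm_num)
  rw [h] at hp
  refine ⟨p.getVert 1, ?_, ?_⟩
  · have := p.adj_getVert_succ (i := 0) (by omega)
    simpa using this
  · have h2 := p.adj_getVert_succ (i := 1) (by omega)
    have h3 : p.getVert 2 = v := by
      rw [show (2 : ℕ) = p.length from hp.symm, SimpleGraph.Walk.getVert_length]
    rwa [h3] at h2

lemma pairWalk {V : Type*} {G : SimpleGraph V} {k : ℕ} (hG : NoShortOddCycle G k)
    {f : ZMod k → V} (hadj : ∀ i, G.Adj (f i) (f (i + 1))) {w : V} {i j : ZMod k}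
    (hi : G.dist w (f i) = 2) (hj : G.dist w (f j) = 2) (d : ℕ)
    (hd : (d : ZMod k) = j - i) (hdo : Odd d) (hdk : d + 4 < k) : False := by
  obtain ⟨x, hwx, hxi⟩ := existsMid hi
  obtain ⟨y, hwy, hyj⟩ := existsMid hj
  have hd1 : 1 ≤ d := hdo.pos
  refine noOddClosedWalk hG (d + 4) (by rw [Nat.odd_iff] at *; omega) hdk
    (fun m => if m = 0 then w else if m = 1 then x else if m ≤ d + 2 then f (i + (m - 2 : ℕ))
      else if m = d + 3 then y else w) (fun m hm => ?_) ?_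
  · rcases eq_or_ne m 0 with rfl | hm0
    · simpa using hwx
    · rcases eq_or_ne m 1 with rfl | hm1
      · simp only [if_neg (by omega : ¬(2:ℕ) = 0), if_neg (by omega : ¬(2:ℕ) = 1),
          if_pos (by omega : (2:ℕ) ≤ d + 2), if_neg (by omega : ¬(1:ℕ) = 0),
          if_pos rfl]
        simpa using hxi
      · by_cases hmid : m ≤ d + 1
        · simp only [if_neg hm0, if_neg hm1, if_pos (by omega : m ≤ d + 2),
            if_neg (by omega : ¬m + 1 = 0), if_neg (by omega : ¬m + 1 = 1),
            if_pos (by omega : m + 1 ≤ d + 2)]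
          have h2 : (m + 1 - 2 : ℕ) = (m - 2) + 1 := by omega
          rw [h2, Nat.cast_add, Nat.cast_one, ← add_assoc]
          exact hadj _
        · rcases eq_or_ne m (d + 2) with rfl | hm2
          · simp only [if_neg hm0, if_neg hm1, if_pos (le_refl (d + 2)),
              if_neg (by omega : ¬d + 2 + 1 = 0), if_neg (by omega : ¬d + 2 + 1 = 1),
              if_neg (by omega : ¬d + 2 + 1 ≤ d + 2), if_pos (by omega : d + 2 + 1 = d + 3)]
            rw [show d + 2 - 2 = d by omega, hd, add_comm, sub_add_cancel]
            exact hyj.symm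
          · have hm3 : m = d + 3 := by omega
            subst hm3
            simp only [if_neg hm0, if_neg hm1, if_neg (by omega : ¬d + 3 ≤ d + 2), if_pos rfl,
              if_neg (by omega : ¬d + 3 + 1 = 0), if_neg (by omega : ¬d + 3 + 1 = 1),
              if_neg (by omega : ¬d + 3 + 1 ≤ d + 2), if_neg (by omega : ¬d + 3 + 1 = d + 3)]
            exact hwy.symm
  · simp

lemma pairDiff {V : Type*} {G : SimpleGraph V} {k : ℕ} (hodd : Odd k) (hk : 7 ≤ k)
    (hG : NoShortOddCycle G k) {f : ZMod k → V} (hadj : ∀ i, G.Adj (f i) (f (i + 1)))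
    {w : V} {i j : ZMod k} (hi : G.dist w (f i) = 2) (hj : G.dist w (f j) = 2)
    (hne : i ≠ j) :
    (j - i).val = 2 ∨ (j - i).val = 4 ∨ (j - i).val = k - 2 ∨ (j - i).val = k - 4 := by
  haveI : NeZero k := ⟨by omega⟩
  have hd0 : (j - i).val ≠ 0 := by
    simp only [ne_eq, ZMod.val_eq_zero, sub_eq_zero]
    exact fun h => hne h.symm
  have hdk : (j - i).val < k := ZMod.val_lt _
  have hc1 : (((j - i).val : ℕ) : ZMod k) = j - i := ZMod.natCast_rightInverse _
  have hc2 : ((k - (j - i).val : ℕ) : ZMod k) = i - j := by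
    rw [Nat.cast_sub hdk.le, ZMod.natCast_self, hc1]
    ring
  have hko := Nat.odd_iff.mp hodd
  by_contra hcon
  push_neg at hcon
  obtain ⟨c1, c2, c3, c4⟩ := hcon
  rcases Nat.even_or_odd (j - i).val with he | ho
  · rw [Nat.even_iff] at he
    exact pairWalk hG hadj hj hi (k - (j - i).val) hc2 (by rw [Nat.odd_iff]; omega) (by omega)
  · have ho' := Nat.odd_iff.mp ho
    exact pairWalk hG hadj hi hj ((j - i).val) hc1 ho (by omega)

lemma noAdjPair {V : Type*} {G : SimpleGraph V} {k : ℕ} (hk : 7 ≤ k)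
    (hG : NoShortOddCycle G k) {w u v : V}
    (hu : G.dist w u = 2) (hv : G.dist w v = 2) (huv : G.Adj u v) : False := by
  obtain ⟨x, hwx, hxu⟩ := existsMid hu
  obtain ⟨y, hwy, hyv⟩ := existsMid hv
  refine noOddClosedWalk hG 5 (by decide) (by omega)
    (fun m => if m = 0 then w else if m = 1 then x else if m = 2 then u else if m = 3 then v
      else if m = 4 then y else w) (fun m hm => ?_) (by norm_num)
  interval_cases m <;> simp [hwx, hxu, huv, hyv.symm, hwy.symm]

lemma card3 {α : Type*} (a b c : α) (S : Set α) (h : S ⊆ {a, b, c}) :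
    Nat.card ↥S ≤ 3 := by
  rw [Nat.card_coe_set_eq]
  calc S.ncard ≤ ({a, b, c} : Set α).ncard := Set.ncard_le_ncard h (Set.toFinite _)
    _ ≤ ({b, c} : Set α).ncard + 1 := Set.ncard_insert_le _ _
    _ ≤ ({c} : Set α).ncard + 1 + 1 := add_le_add_left (Set.ncard_insert_le _ _) 1
    _ ≤ 3 := by rw [Set.ncard_singleton]

theorem distance_two_vertices_on_cycle {V : Type*} (k : ℕ) (hodd : Odd k) (hk : 7 ≤ k)
    (G : SimpleGraph V) (hG : NoShortOddCycle G k) (f : ZMod k → V)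
    (hf : IsCycleMap G f) (w : V) :
    Nat.card ↥{i : ZMod k | G.dist w (f i) = 2} ≤ 3 ∧
      ∀ i j : ZMod k, G.dist w (f i) = 2 → G.dist w (f j) = 2 → ¬ G.Adj (f i) (f j) := by
  obtain ⟨-, hadj⟩ := hf
  haveI : NeZero k := ⟨by omega⟩
  have hk2 : k % 2 = 1 := Nat.odd_iff.mp hodd
  set S : Set (ZMod k) := {i : ZMod k | G.dist w (f i) = 2} with hS
  have hmem : ∀ i : ZMod k, i ∈ S ↔ G.dist w (f i) = 2 := fun i => Iff.rfl
  refine ⟨?_, fun i j hi hj hA => noAdjPair hk hG hi hj hA⟩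
  rcases Set.eq_empty_or_nonempty S with hE | ⟨i0, hi0⟩
  · rw [hE]
    simp
  · -- classification of elements of S
    have key : ∀ j ∈ S, j = i0 ∨ j = i0 + 2 ∨ j = i0 + 4 ∨ j = i0 - 2 ∨ j = i0 - 4 := by
      intro j hj
      rcases eq_or_ne j i0 with h | h
      · exact Or.inl h
      have hval := pairDiff hodd hk hG hadj hi0 hj (fun hh => h hh.symm)
      have hrep : j = i0 + (((j - i0).val : ℕ) : ZMod k) := by
        rw [ZMod.natCast_rightInverse _]
        ring
      rcases hval with h2 | h4 | hk2' | hk4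
      · rw [h2] at hrep
        right; left
        rw [hrep]; norm_num
      · rw [h4] at hrep
        right; right; left
        rw [hrep]; norm_num
      · rw [hk2'] at hrep
        right; right; right; left
        rw [hrep, Nat.cast_sub (by omega : 2 ≤ k), ZMod.natCast_self]
        push_cast
        ring
      · rw [hk4] at hrep
        right; right; right; right
        rw [hrep, Nat.cast_sub (by omega : 4 ≤ k), ZMod.natCast_self]
        push_cast
        ring
    -- exclusion of far-apart pairs
    have excl : ∀ (a b : ZMod k) (c : ℕ), b - a = (c : ZMod k) → (c = 6 ∨ c = 8) →
        a ∈ S → b ∈ S → False := by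
      intro a b c hcast hc haS hbS
      have hc' : 0 < c ∧ c ≤ 8 := by rcases hc with rfl | rfl <;> omega
      have hne : a ≠ b := by
        intro h
        have h0 : ((c : ℕ) : ZMod k) = 0 := by rw [← hcast, h, sub_self]
        have hdvd := (ZMod.natCast_eq_zero_iff _ _).mp h0
        have hle := Nat.le_of_dvd (by omega) hdvd
        have hk7 : k = 7 := by omega
        subst hk7
        rcases hc with rfl | rfl <;> omega
      have hval := pairDiff hodd hk hG hadj haS hbS hne
      rw [hcast, ZMod.val_natCast] at hval
      rcases hc with h6 | h8
      · subst h6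
        rw [Nat.mod_eq_of_lt (by omega)] at hval
        rcases hval with h | h | h | h <;> omega
      · subst h8
        rcases eq_or_ne k 7 with h7 | h7
        · subst h7
          rcases hval with h | h | h | h <;> omega
        · rw [Nat.mod_eq_of_lt (by omega)] at hval
          rcases hval with h | h | h | h <;> omega
    by_cases h4p : i0 + 4 ∈ S
    · refine card3 i0 (i0 + 2) (i0 + 4) S ?_
      intro j hj
      rcases key j hj with rfl | rfl | rfl | h | h
      · exact Or.inl rfl
      · exact Or.inr (Or.inl rfl)
      · exact Or.inr (Or.inr rfl)
      · exact absurd (excl (i0 - 2) (i0 + 4) 6 (by push_cast; ring) (Or.inl rfl)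
          (h ▸ hj) h4p) not_false
      · exact absurd (excl (i0 - 4) (i0 + 4) 8 (by push_cast; ring) (Or.inr rfl)
          (h ▸ hj) h4p) not_false
    · by_cases h4m : i0 - 4 ∈ S
      · refine card3 (i0 - 4) (i0 - 2) i0 S ?_
        intro j hj
        rcases key j hj with rfl | rfl | rfl | h | h
        · exact Or.inr (Or.inr rfl)
        · exact absurd (excl (i0 - 4) (i0 + 2) 6 (by push_cast; ring) (Or.inl rfl)
            h4m hj) not_false
        · exact absurd (h4p hj) not_false
        · exact Or.inr (Or.inl h)
        · exact Or.inl h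
      · refine card3 (i0 - 2) i0 (i0 + 2) S ?_
        intro j hj
        rcases key j hj with rfl | rfl | rfl | h | h
        · exact Or.inr (Or.inl rfl)
        · exact Or.inr (Or.inr rfl)
        · exact absurd (h4p hj) not_false
        · exact Or.inl h
        · exact absurd (h4m (h ▸ hj)) not_false
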